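/- arXiv:1212.2180 — 3 statements merged into one kernel-verified Lean document; each statement's English description precedes it below -/
import Mathlib

section
/- Let Q ⊂ ℝ^N be a measurable set of finite measure and φ : ℝ → ℝ a continuous function with φ(s)·s ≥ 0 for all s ∈ ℝ. If uₙ → u almost everywhere in Q and sup_n ∫_Q φ(uₙ(x))·uₙ(x) dx < ∞, then φ(uₙ) → φ(u) strongly in L¹(Q). -/
open MeasureTheory Filter
open scoped ENNReal NNReal

/-- Pointwise bound: `|φ t| ≤ Mk + φ t * t / k`. -/
lemma pt_bound (φ : ℝ → ℝ) (hsign : ∀ s : ℝ, 0 ≤ φ s * s) {k Mk : ℝ} (hk : 0 < k)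
    (hMk : ∀ t : ℝ, |t| ≤ k → |φ t| ≤ Mk) (t : ℝ) :
    |φ t| ≤ Mk + φ t * t / k := by
  have habs : φ t * t = |φ t| * |t| := by
    rw [← abs_mul]; exact (abs_of_nonneg (hsign t)).symm
  rcases le_or_gt |t| k with h | h
  · have : 0 ≤ φ t * t / k := div_nonneg (hsign t) hk.le
    linarith [hMk t h]
  · have hMk0 : 0 ≤ Mk := le_trans (abs_nonneg _) (hMk 0 (by simpa using hk.le))
    have h1 : |φ t| * k ≤ |φ t| * |t| :=
      mul_le_mul_of_nonneg_left h.le (abs_nonneg _)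
    have : |φ t| ≤ φ t * t / k := by
      rw [habs, le_div_iff₀ hk]; linarith
    linarith

/-- Key lintegral bound. -/
lemma key_bound {X : Type*} [MeasurableSpace X] (μ : Measure X) (φ : ℝ → ℝ)
    (hsign : ∀ s : ℝ, 0 ≤ φ s * s) {k Mk : ℝ} (hk : 0 < k)
    (hMk : ∀ t : ℝ, |t| ≤ k → |φ t| ≤ Mk) (v : X → ℝ) :
    ∫⁻ x, ‖φ (v x)‖₊ ∂μ ≤
      ENNReal.ofReal Mk * μ Set.univ +
        (∫⁻ x, ENNReal.ofReal (φ (v x) * v x) ∂μ) * ENNReal.ofReal (1 / k) := by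
  have hpt : ∀ x, (‖φ (v x)‖₊ : ℝ≥0∞) ≤
      ENNReal.ofReal Mk + ENNReal.ofReal (φ (v x) * v x) * ENNReal.ofReal (1 / k) := by
    intro x
    have h1 : (‖φ (v x)‖₊ : ℝ≥0∞) = ENNReal.ofReal |φ (v x)| := by
      rw [← enorm_eq_nnnorm, ← ofReal_norm, Real.norm_eq_abs]
    rw [h1, ← ENNReal.ofReal_mul (hsign _)]
    calc ENNReal.ofReal |φ (v x)| ≤ ENNReal.ofReal (Mk + φ (v x) * v x * (1 / k)) := by
          apply ENNReal.ofReal_le_ofReal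
          have := pt_bound φ hsign hk hMk (v x)
          rw [mul_one_div]; linarith
      _ ≤ _ := ENNReal.ofReal_add_le
  calc ∫⁻ x, ‖φ (v x)‖₊ ∂μ
      ≤ ∫⁻ x, (ENNReal.ofReal Mk + ENNReal.ofReal (φ (v x) * v x) * ENNReal.ofReal (1 / k)) ∂μ :=
        lintegral_mono hpt
    _ = ENNReal.ofReal Mk * μ Set.univ +
        (∫⁻ x, ENNReal.ofReal (φ (v x) * v x) ∂μ) * ENNReal.ofReal (1 / k) := by
        rw [lintegral_add_left measurable_const, lintegral_const,
          lintegral_mul_const' _ _ ENNReal.ofReal_ne_top]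

/-- **Lemma A.2.** Let `Q ⊂ ℝ^N` be measurable with finite measure and
`φ : ℝ → ℝ` continuous with `φ(s)·s ≥ 0`. If `uₙ → u` a.e. in `Q` and the integrals
`∫_Q φ(uₙ)·uₙ` are uniformly bounded, then `φ(u) ∈ L¹(Q)` and `φ(uₙ) → φ(u)` in `L¹(Q)`. -/
theorem stmt1 {N : ℕ} (Q : Set (EuclideanSpace ℝ (Fin N))) (hQ : MeasurableSet Q)
    (hQfin : volume Q < ⊤) (φ : ℝ → ℝ) (hφ : Continuous φ)
    (hsign : ∀ s : ℝ, 0 ≤ φ s * s)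
    (u : ℕ → EuclideanSpace ℝ (Fin N) → ℝ) (ulim : EuclideanSpace ℝ (Fin N) → ℝ)
    (hmeas : ∀ n, Measurable (u n)) (hmeas' : Measurable ulim)
    (hae : ∀ᵐ x ∂(volume.restrict Q), Tendsto (fun n => u n x) atTop (nhds (ulim x)))
    (C : ℝ)
    (hbound : ∀ n, ∫⁻ x in Q, ENNReal.ofReal (φ (u n x) * u n x) ≤ ENNReal.ofReal C) :
    IntegrableOn (fun x => φ (ulim x)) Q ∧
    Tendsto (fun n => ∫ x in Q, |φ (u n x) - φ (ulim x)|) atTop (nhds 0) := by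
  classical
  let μ := volume.restrict Q
  have hμuniv : μ Set.univ = volume Q := Measure.restrict_apply_univ Q
  have hfin : IsFiniteMeasure μ := ⟨by rw [hμuniv]; exact hQfin⟩
  have hfmeas : ∀ n, Measurable (fun x => φ (u n x)) := fun n => hφ.measurable.comp (hmeas n)
  have hgmeas : Measurable (fun x => φ (ulim x)) := hφ.measurable.comp hmeas'
  have hMbound : ∀ k : ℝ, 0 < k → ∃ Mk : ℝ, ∀ t : ℝ, |t| ≤ k → |φ t| ≤ Mk := by
    intro k hk
    obtain ⟨Mk, hMk⟩ :=
      (isCompact_Icc (a := -k) (b := k)).exists_bound_of_continuousOn hφ.continuousOn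
    refine ⟨Mk, fun t ht => ?_⟩
    have := hMk t (by rw [Set.mem_Icc]; constructor <;> [linarith [abs_le.mp ht]; linarith [abs_le.mp ht]])
    simpa [Real.norm_eq_abs] using this
  -- the limit satisfies the same uniform bound, by Fatou
  have hgC : ∫⁻ x, ENNReal.ofReal (φ (ulim x) * ulim x) ∂μ ≤ ENNReal.ofReal C := by
    have hcong : ∀ᵐ x ∂μ, ENNReal.ofReal (φ (ulim x) * ulim x)
        = liminf (fun n => ENNReal.ofReal (φ (u n x) * u n x)) atTop := by
      filter_upwards [hae] with x hx
      exact (Tendsto.liminf_eq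
        (ENNReal.tendsto_ofReal (((hφ.tendsto _).comp hx).mul hx))).symm
    rw [lintegral_congr_ae hcong]
    refine le_trans (lintegral_liminf_le fun n =>
      (((hφ.measurable.comp (hmeas n)).mul (hmeas n)).ennreal_ofReal)) ?_
    refine le_trans (liminf_le_liminf (Eventually.of_forall fun n => hbound n)) ?_
    simp
  obtain ⟨M1, hM1⟩ := hMbound 1 one_pos
  have hM10 : 0 ≤ M1 := le_trans (abs_nonneg _) (hM1 0 (by norm_num))
  have hfinite : ∀ (v : EuclideanSpace ℝ (Fin N) → ℝ),
      (∫⁻ x, ENNReal.ofReal (φ (v x) * v x) ∂μ ≤ ENNReal.ofReal C) →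
      ∫⁻ x, ‖φ (v x)‖₊ ∂μ < ⊤ := by
    intro v hv
    refine lt_of_le_of_lt (key_bound μ φ hsign one_pos hM1 v) ?_
    refine ENNReal.add_lt_top.2 ⟨?_, ?_⟩
    · exact ENNReal.mul_lt_top ENNReal.ofReal_lt_top (by rw [hμuniv]; exact hQfin)
    · exact ENNReal.mul_lt_top (lt_of_le_of_lt hv ENNReal.ofReal_lt_top) ENNReal.ofReal_lt_top
  have hmemf : ∀ n, MemLp (fun x => φ (u n x)) 1 μ := fun n =>
    ⟨(hfmeas n).aestronglyMeasurable, by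
      rw [eLpNorm_one_eq_lintegral_enorm]; exact hfinite (u n) (hbound n)⟩
  have hmemg : MemLp (fun x => φ (ulim x)) 1 μ :=
    ⟨hgmeas.aestronglyMeasurable, by
      rw [eLpNorm_one_eq_lintegral_enorm]; exact hfinite ulim hgC⟩
  -- uniform integrability
  have hui : UnifIntegrable (fun n x => φ (u n x)) 1 μ := by
    intro ε hε
    have hkpos : (0:ℝ) < 2 * (|C| + 1) / ε := by positivity
    obtain ⟨Mk, hMk⟩ := hMbound (2 * (|C| + 1) / ε) hkpos
    have hMk0 : 0 ≤ Mk := le_trans (abs_nonneg _) (hMk 0 (by simpa using hkpos.le))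
    refine ⟨ε / (2 * (Mk + 1)), by positivity, fun i s hs hμs => ?_⟩
    rw [eLpNorm_indicator_eq_eLpNorm_restrict hs, eLpNorm_one_eq_lintegral_enorm]
    refine le_trans (key_bound (μ.restrict s) φ hsign hkpos hMk (u i)) ?_
    have h1 : (μ.restrict s) Set.univ ≤ ENNReal.ofReal (ε / (2 * (Mk + 1))) := by
      rw [Measure.restrict_apply_univ]; exact hμs
    have h2 : ∫⁻ x, ENNReal.ofReal (φ (u i x) * u i x) ∂(μ.restrict s) ≤ ENNReal.ofReal |C| :=
      le_trans (lintegral_mono' Measure.restrict_le_self le_rfl)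
        (le_trans (hbound i) (ENNReal.ofReal_le_ofReal (le_abs_self C)))
    have h3 : Mk * (ε / (2 * (Mk + 1))) ≤ ε / 2 := by
      have h4 : (0:ℝ) < 2 * (Mk + 1) := by positivity
      rw [mul_comm, div_mul_eq_mul_div, div_le_div_iff₀ h4 two_pos]
      nlinarith [hε.le, hMk0]
    have h5 : |C| * (1 / (2 * (|C| + 1) / ε)) ≤ ε / 2 := by
      have h6 : (0:ℝ) < 2 * (|C| + 1) := by positivity
      rw [one_div_div, mul_comm, div_mul_eq_mul_div, div_le_div_iff₀ h6 two_pos]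
      nlinarith [hε.le, abs_nonneg C]
    calc ENNReal.ofReal Mk * (μ.restrict s) Set.univ +
          (∫⁻ x, ENNReal.ofReal (φ (u i x) * u i x) ∂(μ.restrict s)) *
            ENNReal.ofReal (1 / (2 * (|C| + 1) / ε))
        ≤ ENNReal.ofReal Mk * ENNReal.ofReal (ε / (2 * (Mk + 1))) +
            ENNReal.ofReal |C| * ENNReal.ofReal (1 / (2 * (|C| + 1) / ε)) :=
          add_le_add (mul_le_mul_right h1 _) (mul_le_mul_left h2 _)
      _ = ENNReal.ofReal (Mk * (ε / (2 * (Mk + 1)))) +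
            ENNReal.ofReal (|C| * (1 / (2 * (|C| + 1) / ε))) := by
          rw [← ENNReal.ofReal_mul hMk0, ← ENNReal.ofReal_mul (abs_nonneg _)]
      _ ≤ ENNReal.ofReal (ε / 2) + ENNReal.ofReal (ε / 2) :=
          add_le_add (ENNReal.ofReal_le_ofReal h3) (ENNReal.ofReal_le_ofReal h5)
      _ = ENNReal.ofReal ε := by
          rw [← ENNReal.ofReal_add (by positivity) (by positivity)]
          norm_num
  -- a.e. convergence of φ(uₙ) to φ(ulim)
  have haeφ : ∀ᵐ x ∂μ, Tendsto (fun n => φ (u n x)) atTop (nhds (φ (ulim x))) := by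
    filter_upwards [hae] with x hx
    exact (hφ.tendsto _).comp hx
  have htendsto :=
    tendsto_Lp_finite_of_tendsto_ae (μ := μ) le_rfl ENNReal.one_ne_top
      (fun n => (hfmeas n).aestronglyMeasurable) hmemg hui haeφ
  refine ⟨memLp_one_iff_integrable.mp hmemg, ?_⟩
  have heq : (fun n => ∫ x in Q, |φ (u n x) - φ (ulim x)|) =
      fun n => (eLpNorm ((fun x => φ (u n x)) - fun x => φ (ulim x)) 1 μ).toReal := by
    funext n
    rw [eLpNorm_one_eq_lintegral_enorm]
    simp only [Pi.sub_apply]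
    rw [← integral_norm_eq_lintegral_enorm (f := fun x => φ (u n x) - φ (ulim x)) (((hfmeas n).sub hgmeas).aestronglyMeasurable)]
    simp [Real.norm_eq_abs]; rfl
  rw [heq]
  have := (ENNReal.tendsto_toReal (a := 0) (by simp)).comp htendsto
  exact this
end

section
/- Let α ∈ (0,1), and let f : ℝ → ℝ be defined by f(s) = s·e^{|s|^α}. Then f is C¹, f(0) = 0, f'(s) ≥ 1 for all s ∈ ℝ, and ∫_{−∞}^{∞} |f'(s)| / (s·f(s) + 1) ds < ∞. -/
open MeasureTheory

private lemma stmt13_deriv (α : ℝ) (hα : α ∈ Set.Ioo (0:ℝ) 1) (s : ℝ) :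
    HasDerivAt (fun s => s * Real.exp (|s| ^ α))
      (Real.exp (|s| ^ α) * (1 + α * |s| ^ α)) s := by
  rcases eq_or_ne s 0 with rfl | hs
  · have hval : Real.exp (|(0:ℝ)| ^ α) * (1 + α * |(0:ℝ)| ^ α) = 1 := by
      simp [Real.zero_rpow (ne_of_gt hα.1)]
    rw [hval, hasDerivAt_iff_tendsto_slope]
    have hc : Continuous fun z : ℝ => Real.exp (|z| ^ α) :=
      Real.continuous_exp.comp ((Real.continuous_rpow_const hα.1.le).comp continuous_abs)
    have ht : Filter.Tendsto (fun z : ℝ => Real.exp (|z| ^ α))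
        (nhdsWithin 0 {(0:ℝ)}ᶜ) (nhds 1) := by
      have := hc.continuousAt (x := (0:ℝ))
      rw [ContinuousAt] at this
      simp only [abs_zero, Real.zero_rpow (ne_of_gt hα.1), Real.exp_zero] at this
      exact this.mono_left nhdsWithin_le_nhds
    refine ht.congr' ?_
    filter_upwards [self_mem_nhdsWithin] with z hz
    have hz' : z ≠ 0 := hz
    simp [slope_def_field, mul_zero, div_eq_iff hz']
    field_simp
  rcases hs.lt_or_gt with h | h
  · have hev : (fun t : ℝ => t * Real.exp ((-t) ^ α)) =ᶠ[nhds s]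
        fun t => t * Real.exp (|t| ^ α) := by
      filter_upwards [Iio_mem_nhds h] with t ht
      rw [abs_of_neg ht]
    have h1 : HasDerivAt (fun t : ℝ => (-t) ^ α) (α * (-s) ^ (α - 1) * (-1)) s := by
      have := (Real.hasDerivAt_rpow_const (p := α) (x := -s) (Or.inl (by linarith))).comp s
        ((hasDerivAt_id s).neg)
      exact this.congr_deriv (by ring)
    have h2 : HasDerivAt (fun t : ℝ => t * Real.exp ((-t) ^ α))
        (1 * Real.exp ((-s) ^ α) + s * (Real.exp ((-s) ^ α) * (α * (-s) ^ (α - 1) * (-1)))) s :=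
      (hasDerivAt_id s).mul (h1.exp)
    have hcongr := h2.congr_of_eventuallyEq hev.symm
    refine hcongr.congr_deriv ?_
    rw [abs_of_neg h]
    have hns : (0:ℝ) < -s := by linarith
    have hkey : s * (-s) ^ (α - 1) * (-1) = (-s) ^ α := by
      rw [show α = (α - 1) + 1 by ring, Real.rpow_add hns, Real.rpow_one]
      ring_nf
    rw [← hkey]; ring
  · have hev : (fun t : ℝ => t * Real.exp (t ^ α)) =ᶠ[nhds s]
        fun t => t * Real.exp (|t| ^ α) := by
      filter_upwards [Ioi_mem_nhds h] with t ht
      rw [abs_of_pos ht]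
    have h1 : HasDerivAt (fun t : ℝ => t ^ α) (α * s ^ (α - 1)) s :=
      Real.hasDerivAt_rpow_const (Or.inl hs)
    have h2 : HasDerivAt (fun t : ℝ => t * Real.exp (t ^ α))
        (1 * Real.exp (s ^ α) + s * (Real.exp (s ^ α) * (α * s ^ (α - 1)))) s :=
      (hasDerivAt_id s).mul (h1.exp)
    have hcongr := h2.congr_of_eventuallyEq hev.symm
    refine hcongr.congr_deriv ?_
    rw [abs_of_pos h]
    have hkey : s * s ^ (α - 1) = s ^ α := by
      rw [show α = (α - 1) + 1 by ring, Real.rpow_add h, Real.rpow_one]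
      ring
    rw [← hkey]; ring

/-- For `α ∈ (0,1)`, `f(s) = s·e^{|s|^α}` is `C¹`, vanishes at `0`,
has derivative `≥ 1` everywhere, and satisfies `∫_{−∞}^{∞} |f'(s)|/(s·f(s)+1) ds < ∞`
(conditions (2.2) and (2.4) of the paper). -/
theorem stmt13 (α : ℝ) (hα : α ∈ Set.Ioo (0:ℝ) 1) (f : ℝ → ℝ)
    (hf : ∀ s, f s = s * Real.exp (|s| ^ α)) :
    ContDiff ℝ 1 f ∧ f 0 = 0 ∧ (∀ s, 1 ≤ deriv f s) ∧
    Integrable (fun s => |deriv f s| / (s * f s + 1)) := by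
  obtain ⟨hα0, hα1⟩ := hα
  have hfF : f = fun s => s * Real.exp (|s| ^ α) := funext hf
  set g : ℝ → ℝ := fun s => Real.exp (|s| ^ α) * (1 + α * |s| ^ α) with hg
  have hd : ∀ s, HasDerivAt f (g s) s := by
    intro s; rw [hfF]; exact stmt13_deriv α ⟨hα0, hα1⟩ s
  have hderiv : deriv f = g := funext fun s => (hd s).deriv
  -- basic positivity facts
  have habs_nonneg : ∀ s : ℝ, 0 ≤ |s| ^ α := fun s => Real.rpow_nonneg (abs_nonneg s) α
  have hg1 : ∀ s, 1 ≤ g s := by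
    intro s
    have h1 : 1 ≤ Real.exp (|s| ^ α) := Real.one_le_exp (habs_nonneg s)
    have h2 : 1 ≤ 1 + α * |s| ^ α := by nlinarith [habs_nonneg s]
    show 1 ≤ Real.exp (|s| ^ α) * (1 + α * |s| ^ α)
    nlinarith
  -- continuity of g
  have hcontg : Continuous g := by
    have hc : Continuous fun s : ℝ => |s| ^ α :=
      (Real.continuous_rpow_const hα0.le).comp continuous_abs
    exact (Real.continuous_exp.comp hc).mul (continuous_const.add (continuous_const.mul hc))
  refine ⟨?_, by simp [hf 0], ?_, ?_⟩
  · exact contDiff_one_iff_deriv.mpr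
      ⟨fun s => (hd s).differentiableAt, by rw [hderiv]; exact hcontg⟩
  · intro s; rw [hderiv]; exact hg1 s
  · -- integrability
    rw [hderiv]
    have hden : ∀ s : ℝ, 1 ≤ s * f s + 1 := by
      intro s
      have : 0 ≤ s * f s := by
        rw [hf s]
        have : s * (s * Real.exp (|s| ^ α)) = s ^ 2 * Real.exp (|s| ^ α) := by ring
        rw [this]
        positivity
      linarith
    have hden0 : ∀ s : ℝ, s * f s + 1 ≠ 0 := fun s => by linarith [hden s]
    set h : ℝ → ℝ := fun s => |g s| / (s * f s + 1) with hh
    have hcont : Continuous h := by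
      apply Continuous.div hcontg.abs
      · rw [hfF]
        have hce : Continuous fun s : ℝ => Real.exp (|s| ^ α) :=
          Real.continuous_exp.comp ((Real.continuous_rpow_const hα0.le).comp continuous_abs)
        exact (continuous_id.mul (continuous_id.mul hce)).add continuous_const
      · exact hden0
    have hnonneg : ∀ s, 0 ≤ h s :=
      fun s => div_nonneg (abs_nonneg _) (by linarith [hden s])
    -- h is even
    have heven : ∀ s, h (-s) = h s := by
      intro s
      simp only [hh, hg, hf, abs_neg]
      ring_nf
    -- bound on Ioi 1
    have hbound : ∀ s : ℝ, 1 < s → h s ≤ 2 * s ^ (α - 2) := by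
      intro s hs1
      have hs0 : (0:ℝ) < s := by linarith
      have hX : 1 ≤ s ^ α := Real.one_le_rpow hs1.le hα0.le
      have hE : (1:ℝ) ≤ Real.exp (s ^ α) := Real.one_le_exp (by linarith)
      have habs : |s| = s := abs_of_pos hs0
      have hfs : s * f s + 1 = s ^ 2 * Real.exp (s ^ α) + 1 := by
        rw [hf s, habs]; ring
      have hgs : g s = Real.exp (s ^ α) * (1 + α * s ^ α) := by rw [hg]; simp [habs]
      have hgpos : 0 < g s := lt_of_lt_of_le one_pos (hg1 s)
      have hrw : (2:ℝ) * s ^ (α - 2) = 2 * (s ^ α / s ^ 2) := by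
        rw [Real.rpow_sub hs0, show ((2:ℝ)) = ((2:ℕ):ℝ) by norm_num, Real.rpow_natCast]
      rw [hh]
      simp only [hfs, hgs, hrw]
      have hpos : (0:ℝ) < Real.exp (s ^ α) * (1 + α * s ^ α) := by nlinarith
      rw [abs_of_pos hpos, div_le_iff₀ (by positivity),
        show 2 * (s ^ α / s ^ 2) * (s ^ 2 * Real.exp (s ^ α) + 1)
          = 2 * s ^ α * (s ^ 2 * Real.exp (s ^ α) + 1) / s ^ 2 by ring,
        le_div_iff₀ (by positivity)]
      have h1 : α * s ^ α ≤ s ^ α := by nlinarith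
      nlinarith [mul_nonneg (mul_nonneg (sq_nonneg s) (Real.exp_pos (s ^ α)).le)
          (sub_nonneg.2 hX),
        mul_nonneg (mul_nonneg (sq_nonneg s) (Real.exp_pos (s ^ α)).le) (sub_nonneg.2 h1)]
    -- integrable on Ioi 1
    have hIoi : IntegrableOn h (Set.Ioi (1:ℝ)) := by
      have hmaj : IntegrableOn (fun s : ℝ => 2 * s ^ (α - 2)) (Set.Ioi (1:ℝ)) :=
        (integrableOn_Ioi_rpow_of_lt (by linarith) one_pos).const_mul 2
      refine hmaj.mono' (hcont.aestronglyMeasurable.restrict) ?_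
      rw [ae_restrict_iff' measurableSet_Ioi]
      filter_upwards with s hs
      rw [Real.norm_eq_abs, abs_of_nonneg (hnonneg s)]
      exact hbound s hs
    -- integrable on Icc (-1) 1
    have hIcc : IntegrableOn h (Set.Icc (-1:ℝ) 1) := hcont.integrableOn_Icc
    -- integrable on Ici 0, hence on Iic 0 by evenness
    have hIci : IntegrableOn h (Set.Ici (0:ℝ)) := by
      have : Set.Ici (0:ℝ) ⊆ Set.Icc (-1:ℝ) 1 ∪ Set.Ioi 1 := by
        intro x hx
        by_cases hx1 : x ≤ 1
        · exact Or.inl ⟨by linarith [Set.mem_Ici.mp hx], hx1⟩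
        · exact Or.inr (by simpa using lt_of_not_ge hx1)
      exact (hIcc.union hIoi).mono_set this
    have hIic : IntegrableOn h (Set.Iic (0:ℝ)) := by
      have h1 : Integrable ((Set.Ici (0:ℝ)).indicator h) :=
        (integrable_indicator_iff measurableSet_Ici).mpr hIci
      have h2 : Integrable (fun s => (Set.Ici (0:ℝ)).indicator h (-s)) := h1.comp_neg
      have h3 : (fun s => (Set.Ici (0:ℝ)).indicator h (-s)) = (Set.Iic (0:ℝ)).indicator h := by
        funext s
        by_cases hs : s ≤ 0
        · rw [Set.indicator_of_mem (by simpa using hs), Set.indicator_of_mem (Set.mem_Iic.mpr hs), heven]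
        · rw [Set.indicator_of_notMem (by simpa using hs),
            Set.indicator_of_notMem (by simpa using hs)]
      rw [h3] at h2
      exact (integrable_indicator_iff measurableSet_Iic).mp h2
    have : IntegrableOn h Set.univ := by
      rw [show (Set.univ : Set ℝ) = Set.Iic 0 ∪ Set.Ici 0 by
        simpa using Set.Iic_union_Ici (a := (0:ℝ))]
      exact hIic.union hIci
    rwa [integrableOn_univ] at this
end

section
/- Let f₁ : ℝ → ℝ be a continuous strictly increasing bijection with f₁(0) = 0, and suppose ∫₁^∞ f₁'(ν)/(ν f₁(ν)) dν < ∞ and ∫_{−∞}^{−1} f₁'(ν)/(ν f₁(ν)) dν < ∞ (f₁ being C¹). Then for every ε > 0, α ∈ (0,1), and 0 ≤ s < t ≤ T, the integral ∫₀^{t−s} ( 1/(σ f₁⁻¹(ε σ^{−α})) − 1/(σ f₁⁻¹(−ε σ^{−α})) ) dσ is finite and bounded above by (1/α)( ∫_{f₁⁻¹(ε T^{−α})}^∞ f₁'(ν)/(ν f₁(ν)) dν + ∫_{−∞}^{f₁⁻¹(−ε T^{−α})} f₁'(ν)/(ν f₁(ν)) dν ). -/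
open MeasureTheory Set

lemma stmt19_side (f₁ ψ f₁' : ℝ → ℝ) (hf' : ∀ ν, HasDerivAt f₁ (f₁' ν) ν)
    (hf'nonneg : ∀ ν, 0 ≤ f₁' ν)
    (hmono : StrictMono f₁) (h0 : f₁ 0 = 0)
    (hinv₁ : Function.LeftInverse ψ f₁) (hinv₂ : Function.RightInverse ψ f₁)
    {ε α τ : ℝ} (hε : 0 < ε) (hα0 : 0 < α) (hτ : 0 < τ)
    (hint : IntegrableOn (fun ν => f₁' ν / (ν * f₁ ν)) (Set.Ioi (ψ (ε * τ ^ (-α))))) :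
    IntegrableOn (fun σ => 1 / (σ * ψ (ε * σ ^ (-α)))) (Set.Ioo 0 τ) ∧
    ∫ σ in Set.Ioo (0:ℝ) τ, 1 / (σ * ψ (ε * σ ^ (-α)))
      = (1 / α) * ∫ ν in Set.Ioi (ψ (ε * τ ^ (-α))), f₁' ν / (ν * f₁ ν) := by
  have hψmono : StrictMono ψ := fun x y h =>
    hmono.lt_iff_lt.mp (by rw [hinv₂, hinv₂]; exact h)
  set a := ψ (ε * τ ^ (-α)) with ha_def
  have hfa : f₁ a = ε * τ ^ (-α) := hinv₂ _
  have hτα : 0 < ε * τ ^ (-α) := by positivity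
  have hψ0 : ψ 0 = 0 := by nth_rewrite 1 [← h0]; exact hinv₁ 0
  have ha : 0 < a := by
    have := hψmono hτα
    rwa [hψ0, ← ha_def] at this
  -- rpow helpers
  have helper1 : ∀ x : ℝ, 0 < x → ε ^ (1/α) * (ε * x ^ (-α)) ^ (-(1/α)) = x := by
    intro x hx
    rw [Real.mul_rpow hε.le (Real.rpow_pos_of_pos hx _).le, ← Real.rpow_mul hx.le]
    have h1 : -α * -(1/α) = 1 := by field_simp
    rw [h1, Real.rpow_one, ← mul_assoc, ← Real.rpow_add hε]
    simp
  have helper2 : ∀ y : ℝ, 0 < y → ε * (ε ^ (1/α) * y ^ (-(1/α))) ^ (-α) = y := by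
    intro y hy
    rw [Real.mul_rpow (Real.rpow_pos_of_pos hε _).le (Real.rpow_pos_of_pos hy _).le,
      ← Real.rpow_mul hε.le, ← Real.rpow_mul hy.le]
    have h1 : (1/α) * -α = -1 := by field_simp
    have h2 : -(1/α) * -α = 1 := by field_simp
    rw [h1, h2, Real.rpow_one, Real.rpow_neg_one, ← mul_assoc,
      mul_inv_cancel₀ hε.ne', one_mul]
  set φ : ℝ → ℝ := fun ν => ε ^ (1/α) * f₁ ν ^ (-(1/α)) with hφ_def
  set φ' : ℝ → ℝ := fun ν => ε ^ (1/α) * (f₁' ν * (-(1/α)) * f₁ ν ^ (-(1/α) - 1)) with hφ'_def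
  have hfpos : ∀ ν ∈ Ioi a, 0 < f₁ ν := fun ν hν => lt_trans hτα (hfa ▸ hmono hν)
  have hφd : ∀ ν ∈ Ioi a, HasDerivWithinAt φ (φ' ν) (Ioi a) ν := by
    intro ν hν
    exact (((hf' ν).rpow_const (Or.inl (hfpos ν hν).ne')).const_mul
      (ε ^ (1/α))).hasDerivWithinAt
  have hanti : StrictAntiOn φ (Ioi a) := by
    intro x hx y hy hxy
    have h1 : f₁ y ^ (-(1/α)) < f₁ x ^ (-(1/α)) :=
      Real.rpow_lt_rpow_of_neg (hfpos x hx) (hmono hxy) (neg_lt_zero.mpr (by positivity))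
    exact mul_lt_mul_of_pos_left h1 (Real.rpow_pos_of_pos hε _)
  have himg : φ '' Ioi a = Ioo 0 τ := by
    ext σ
    constructor
    · rintro ⟨ν, hν, rfl⟩
      have hfν := hfpos ν hν
      refine ⟨by positivity, ?_⟩
      have h1 : f₁ ν ^ (-(1/α)) < (ε * τ ^ (-α)) ^ (-(1/α)) :=
        Real.rpow_lt_rpow_of_neg hτα (hfa ▸ hmono hν) (neg_lt_zero.mpr (by positivity))
      calc ε ^ (1/α) * f₁ ν ^ (-(1/α))
          < ε ^ (1/α) * (ε * τ ^ (-α)) ^ (-(1/α)) :=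
            mul_lt_mul_of_pos_left h1 (Real.rpow_pos_of_pos hε _)
        _ = τ := helper1 τ hτ
    · rintro ⟨hσ0, hστ⟩
      refine ⟨ψ (ε * σ ^ (-α)), ?_, ?_⟩
      · have hx : τ ^ (-α) < σ ^ (-α) :=
          Real.rpow_lt_rpow_of_neg hσ0 hστ (by linarith)
        exact hψmono (by nlinarith)
      · have hfν : f₁ (ψ (ε * σ ^ (-α))) = ε * σ ^ (-α) := hinv₂ _
        rw [hφ_def]; beta_reduce
        rw [hfν]
        exact helper1 σ hσ0
  have hkey : ∀ ν ∈ Ioi a,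
      |φ' ν| • (1 / (φ ν * ψ (ε * (φ ν) ^ (-α))))
        = (1/α) * (f₁' ν / (ν * f₁ ν)) := by
    intro ν hν
    have hfν := hfpos ν hν
    have hν0 : 0 < ν := lt_trans ha hν
    have hψφ : ψ (ε * (φ ν) ^ (-α)) = ν := by
      rw [hφ_def]; beta_reduce
      rw [helper2 (f₁ ν) hfν, hinv₁]
    rw [hψφ]
    have habs : |φ' ν| = ε ^ (1/α) * (f₁' ν * (1/α) * f₁ ν ^ (-(1/α) - 1)) := by
      have : φ' ν = -(ε ^ (1/α) * (f₁' ν * (1/α) * f₁ ν ^ (-(1/α) - 1))) := by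
        rw [hφ'_def]; ring
      rw [this, abs_neg, abs_of_nonneg]
      have h1 : 0 ≤ ε ^ (1/α) := (Real.rpow_pos_of_pos hε _).le
      have h2 : (0:ℝ) ≤ 1/α := by positivity
      have h3 : 0 ≤ f₁ ν ^ (-(1/α) - 1) := (Real.rpow_pos_of_pos hfν _).le
      exact mul_nonneg h1 (mul_nonneg (mul_nonneg (hf'nonneg ν) h2) h3)
    rw [habs, smul_eq_mul, hφ_def]; beta_reduce
    rw [Real.rpow_sub hfν, Real.rpow_one]
    have hεα : (0:ℝ) < ε ^ (1/α) := Real.rpow_pos_of_pos hε _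
    have hfνα : (0:ℝ) < f₁ ν ^ (-(1/α)) := Real.rpow_pos_of_pos hfν _
    field_simp
  have hmeas : MeasurableSet (Ioi a) := measurableSet_Ioi
  have hinj := hanti.injOn
  have hEq := integral_image_eq_integral_abs_deriv_smul hmeas hφd hinj
    (fun σ => 1 / (σ * ψ (ε * σ ^ (-α))))
  have hIff := integrableOn_image_iff_integrableOn_abs_deriv_smul hmeas hφd hinj
    (fun σ => 1 / (σ * ψ (ε * σ ^ (-α))))
  rw [himg] at hEq hIff
  have hint' : IntegrableOn (fun ν => (1/α) * (f₁' ν / (ν * f₁ ν))) (Ioi a) :=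
    hint.const_mul _
  constructor
  · rw [hIff]
    exact (hint'.congr_fun (fun ν hν => (hkey ν hν).symm) hmeas)
  · rw [hEq, setIntegral_congr_fun hmeas hkey, integral_const_mul]

set_option maxHeartbeats 1000000 in
/-- **key computation in Lemma 3.3.** Let `f₁` be a `C¹` strictly increasing
bijection of `ℝ` with `f₁(0) = 0` and inverse `ψ`, such that
`∫₁^∞ f₁'(ν)/(ν f₁(ν)) dν < ∞` and `∫_{−∞}^{−1} f₁'(ν)/(ν f₁(ν)) dν < ∞`. Then for every
`ε > 0`, `α ∈ (0,1)` and `0 ≤ s < t ≤ T`, the integral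
`∫₀^{t−s} (1/(σ f₁⁻¹(ε σ^{−α})) − 1/(σ f₁⁻¹(−ε σ^{−α}))) dσ` is finite and bounded by
`(1/α)(∫_{f₁⁻¹(ε T^{−α})}^∞ f₁'(ν)/(ν f₁(ν)) dν + ∫_{−∞}^{f₁⁻¹(−ε T^{−α})} f₁'(ν)/(ν f₁(ν)) dν)`. -/
theorem stmt19 (f₁ ψ : ℝ → ℝ) (hf₁ : ContDiff ℝ 1 f₁) (hmono : StrictMono f₁)
    (hbij : Function.Bijective f₁) (h0 : f₁ 0 = 0)
    (hinv₁ : Function.LeftInverse ψ f₁) (hinv₂ : Function.RightInverse ψ f₁)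
    (hint1 : IntegrableOn (fun ν => deriv f₁ ν / (ν * f₁ ν)) (Set.Ici (1:ℝ)))
    (hint2 : IntegrableOn (fun ν => deriv f₁ ν / (ν * f₁ ν)) (Set.Iic (-1:ℝ)))
    (ε α s t T : ℝ) (hε : 0 < ε) (hα : α ∈ Set.Ioo (0:ℝ) 1)
    (hs : 0 ≤ s) (hst : s < t) (htT : t ≤ T) :
    IntegrableOn
        (fun σ => 1 / (σ * ψ (ε * σ ^ (-α))) - 1 / (σ * ψ (-(ε * σ ^ (-α)))))
        (Set.Ioc 0 (t - s)) ∧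
    (∫ σ in Set.Ioc (0:ℝ) (t - s),
        (1 / (σ * ψ (ε * σ ^ (-α))) - 1 / (σ * ψ (-(ε * σ ^ (-α)))))) ≤
      (1 / α) *
        ((∫ ν in Set.Ici (ψ (ε * T ^ (-α))), deriv f₁ ν / (ν * f₁ ν)) +
          ∫ ν in Set.Iic (ψ (-(ε * T ^ (-α)))), deriv f₁ ν / (ν * f₁ ν)) := by
  obtain ⟨hα0, hα1⟩ := hα
  have hdiff : Differentiable ℝ f₁ := hf₁.differentiable one_ne_zero
  have hcontd : Continuous (deriv f₁) := hf₁.continuous_deriv le_rfl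
  -- derivative of a monotone function is nonnegative
  have hder : ∀ x, 0 ≤ deriv f₁ x := by
    intro x
    have hd : HasDerivAt f₁ (deriv f₁ x) x := (hdiff x).hasDerivAt
    rw [hasDerivAt_iff_tendsto_slope] at hd
    refine ge_of_tendsto hd ?_
    filter_upwards [self_mem_nhdsWithin] with y hy
    have hy' : y ≠ x := hy
    rw [slope_def_field]
    rcases lt_or_gt_of_ne hy' with h | h
    · exact div_nonneg_iff.2 (Or.inr ⟨sub_nonpos.2 (hmono h).le, sub_nonpos.2 h.le⟩)
    · exact div_nonneg (sub_nonneg.2 (hmono h).le) (sub_nonneg.2 h.le)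
  have hψmono : StrictMono ψ := fun x y h =>
    hmono.lt_iff_lt.mp (by rw [hinv₂, hinv₂]; exact h)
  have hψ0 : ψ 0 = 0 := by nth_rewrite 1 [← h0]; exact hinv₁ 0
  set τ := t - s with hτ_def
  have hτ : 0 < τ := sub_pos.2 hst
  have hτT : τ ≤ T := by simp only [hτ_def]; linarith
  have hT : 0 < T := lt_of_lt_of_le hτ hτT
  set A := ψ (ε * T ^ (-α)) with hA_def
  set B := ψ (-(ε * T ^ (-α))) with hB_def
  have hTα : 0 < ε * T ^ (-α) := by positivity
  have hA : 0 < A := by have := hψmono hTα; rwa [hψ0, ← hA_def] at this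
  have hB : B < 0 := by
    have := hψmono (show -(ε * T ^ (-α)) < 0 by linarith)
    rwa [hψ0, ← hB_def] at this
  have hfA : f₁ A = ε * T ^ (-α) := hinv₂ _
  have hfB : f₁ B = -(ε * T ^ (-α)) := hinv₂ _
  set F : ℝ → ℝ := fun ν => deriv f₁ ν / (ν * f₁ ν) with hF_def
  -- integrability of F on Ici A
  have hFA : IntegrableOn F (Ici A) := by
    have hsub : Ici A ⊆ Icc A 1 ∪ Ici 1 := fun ν hν => by
      by_cases h : ν ≤ 1
      · exact Or.inl ⟨hν, h⟩
      · exact Or.inr (le_of_not_ge h)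
    have hcontOn : ContinuousOn F (Icc A 1) := by
      apply ContinuousOn.div hcontd.continuousOn
        ((continuous_id.mul hf₁.continuous).continuousOn)
      intro ν hν
      have hν0 : 0 < ν := lt_of_lt_of_le hA hν.1
      have hfν : 0 < f₁ ν := lt_of_lt_of_le hTα (hfA ▸ hmono.monotone hν.1)
      exact (mul_pos hν0 hfν).ne'
    exact ((hcontOn.integrableOn_Icc).union hint1).mono_set hsub
  -- integrability of F on Iic B
  have hFB : IntegrableOn F (Iic B) := by
    have hsub : Iic B ⊆ Iic (-1) ∪ Icc (-1) B := fun ν hν => by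
      by_cases h : (-1:ℝ) ≤ ν
      · exact Or.inr ⟨h, hν⟩
      · exact Or.inl (le_of_not_ge h)
    have hcontOn : ContinuousOn F (Icc (-1) B) := by
      apply ContinuousOn.div hcontd.continuousOn
        ((continuous_id.mul hf₁.continuous).continuousOn)
      intro ν hν
      have hν0 : ν < 0 := lt_of_le_of_lt hν.2 hB
      have hfν : f₁ ν < 0 := lt_of_le_of_lt (hfB ▸ hmono.monotone hν.2) (by linarith)
      exact (mul_pos_of_neg_of_neg hν0 hfν).ne'
    exact (hint2.union (hcontOn.integrableOn_Icc)).mono_set hsub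
  -- nonnegativity of F on the two sets
  have hFnnA : ∀ ν ∈ Ici A, 0 ≤ F ν := by
    intro ν hν
    have hν0 : 0 < ν := lt_of_lt_of_le hA hν
    have hfν : 0 < f₁ ν := lt_of_lt_of_le hTα (hfA ▸ hmono.monotone hν)
    exact div_nonneg (hder ν) (mul_pos hν0 hfν).le
  have hFnnB : ∀ ν ∈ Iic B, 0 ≤ F ν := by
    intro ν hν
    have hν0 : ν < 0 := lt_of_le_of_lt hν hB
    have hfν : f₁ ν < 0 := lt_of_le_of_lt (hfB ▸ hmono.monotone hν) (by linarith)
    exact div_nonneg (hder ν) (mul_pos_of_neg_of_neg hν0 hfν).le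
  -- comparison of endpoints
  have hTτ : ε * T ^ (-α) ≤ ε * τ ^ (-α) :=
    mul_le_mul_of_nonneg_left
      (Real.rpow_le_rpow_of_nonpos hτ hτT (neg_nonpos.mpr hα0.le)) hε.le
  set a := ψ (ε * τ ^ (-α)) with ha_def
  set b := ψ (-(ε * τ ^ (-α))) with hb_def
  have hAa : A ≤ a := hψmono.monotone hTτ
  have hbB : b ≤ B := hψmono.monotone (by linarith)
  -- first substitution
  obtain ⟨hI₁, hE₁⟩ := stmt19_side f₁ ψ (deriv f₁) (fun ν => (hdiff ν).hasDerivAt)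
    hder hmono h0 hinv₁ hinv₂ hε hα0 hτ
    (hFA.mono_set (fun ν hν => le_trans hAa (le_of_lt hν)))
  -- second substitution with reflected data
  set f₂ : ℝ → ℝ := fun ν => -f₁ (-ν) with hf₂_def
  set ψ₂ : ℝ → ℝ := fun u => -ψ (-u) with hψ₂_def
  have hf₂' : ∀ ν, HasDerivAt f₂ (deriv f₁ (-ν)) ν := by
    intro ν
    have h1 := (((hdiff (-ν)).hasDerivAt.comp ν (hasDerivAt_neg ν)).neg)
    simp only [mul_neg, mul_one, neg_neg] at h1
    exact h1
  have hmono₂ : StrictMono f₂ := fun x y h => neg_lt_neg (hmono (neg_lt_neg h))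
  have h0₂ : f₂ 0 = 0 := by simp [hf₂_def, h0]
  have hinv₁₂ : Function.LeftInverse ψ₂ f₂ := fun ν => by
    simp [hf₂_def, hψ₂_def, hinv₁ (-ν)]
  have hinv₂₂ : Function.RightInverse ψ₂ f₂ := fun u => by
    simp [hf₂_def, hψ₂_def, hinv₂ (-u)]
  have hint₂' : IntegrableOn (fun ν => deriv f₁ (-ν) / (ν * f₂ ν))
      (Ioi (ψ₂ (ε * τ ^ (-α)))) := by
    have h1 : IntegrableOn F (Iio b) :=
      hFB.mono_set (fun ν hν => le_trans (le_of_lt hν) hbB)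
    have h2 : IntegrableOn (fun ν => F (-ν)) (Ioi (-b)) := by
      have := (MeasurePreserving.integrableOn_comp_preimage
        (Measure.measurePreserving_neg (volume : Measure ℝ))
        (Homeomorph.neg ℝ).measurableEmbedding).2 h1
      simp at this
      exact this
    have h3 : (fun ν => deriv f₁ (-ν) / (ν * f₂ ν)) = fun ν => F (-ν) := by
      funext ν
      simp only [hf₂_def, hF_def]
      rw [← neg_mul_comm]
    rw [h3, hψ₂_def]
    exact h2
  obtain ⟨hI₂, hE₂⟩ := stmt19_side f₂ ψ₂ (fun ν => deriv f₁ (-ν)) hf₂'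
    (fun ν => hder (-ν)) hmono₂ h0₂ hinv₁₂ hinv₂₂ hε hα0 hτ hint₂'
  -- rewrite the second integrand
  have hfun : (fun σ : ℝ => 1 / (σ * ψ₂ (ε * σ ^ (-α))))
      = fun σ => -(1 / (σ * ψ (-(ε * σ ^ (-α))))) := by
    funext σ
    show 1 / (σ * -ψ (-(ε * σ ^ (-α)))) = _
    rw [mul_neg, one_div, one_div, inv_neg]
  rw [hfun] at hI₂ hE₂
  have hfun2 : (fun σ : ℝ => 1 / (σ * ψ (ε * σ ^ (-α))) - 1 / (σ * ψ (-(ε * σ ^ (-α)))))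
      = fun σ => 1 / (σ * ψ (ε * σ ^ (-α))) + -(1 / (σ * ψ (-(ε * σ ^ (-α))))) := by
    funext σ; ring
  -- the second image integral equals the integral over Iic b
  have hG : (∫ ν in Ioi (ψ₂ (ε * τ ^ (-α))), deriv f₁ (-ν) / (ν * f₂ ν))
      = ∫ ν in Iic b, F ν := by
    have h3 : (fun ν => deriv f₁ (-ν) / (ν * f₂ ν)) = fun ν => F (-ν) := by
      funext ν
      simp only [hf₂_def, hF_def]
      rw [← neg_mul_comm]
    rw [h3, hψ₂_def]
    have := integral_comp_neg_Ioi (-b) F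
    simp only [neg_neg] at this
    exact this
  rw [hG] at hE₂
  constructor
  · rw [integrableOn_Ioc_iff_integrableOn_Ioo, hfun2]
    exact hI₁.add hI₂
  · rw [integral_Ioc_eq_integral_Ioo, hfun2, integral_add hI₁ hI₂, hE₁, hE₂]
    have h1α : (0:ℝ) ≤ 1 / α := by positivity
    have hX : (∫ ν in Ioi a, F ν) ≤ ∫ ν in Ici A, F ν := by
      apply setIntegral_mono_set hFA
        (ae_restrict_of_forall_mem measurableSet_Ici hFnnA)
      exact HasSubset.Subset.eventuallyLE (fun ν hν => le_trans hAa (le_of_lt hν))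
    have hY : (∫ ν in Iic b, F ν) ≤ ∫ ν in Iic B, F ν := by
      apply setIntegral_mono_set hFB
        (ae_restrict_of_forall_mem measurableSet_Iic hFnnB)
      exact HasSubset.Subset.eventuallyLE (Iic_subset_Iic.mpr hbB)
    rw [mul_add]
    exact add_le_add (mul_le_mul_of_nonneg_left hX h1α) (mul_le_mul_of_nonneg_left hY h1α)
end
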